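/- Let D = {z ∈ ℂ : |z| < 1} be the open unit disk, let α > 0, and fix κ with 0 < κ < α/(4+α). Let u : D → ℝ be a bounded continuous function such that for every z ∈ D there exists ρ(z) with 0 < ρ(z) ≤ κ·(1−|z|) and u(z) = (1/2π)∫₀^{2π} u(z + ρ(z)e^{iθ}) dθ. Define v(z) := sup over pairs (x,r) with x ∈ D, 0 < r ≤ κ·(1−|x|), |z − x| < r, u(x) = (1/2π)∫₀^{2π} u(x + re^{iθ}) dθ, of h_{x,r}(z), where h_{x,r}(z) = (1/2π)∫₀^{2π} u(x + re^{iθ})·(r² − |z − x|²)/|x + re^{iθ} − z|² dθ. Let ξ ∈ ∂D be a boundary point such that u(z) → u_ξ as z → ξ with z constrained to the non-tangential cone Γ_α(ξ) := {p ∈ D : |ξ − p| ≤ (1+α)(1−|p|)}. Then for every sequence (z_n) in D with z_n → ξ and |ξ − z_n|/(1 − |z_n|) → 1, one has v(z_n) → u_ξ. -/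

import Mathlib

open MeasureTheory Metric Complex Filter
open intervalIntegral

/-- The average of `u` over the circle of center `z` and radius `r`
(with respect to the uniform probability measure on the circle). -/
noncomputable def circleAvg (u : ℂ → ℝ) (z : ℂ) (r : ℝ) : ℝ :=
  (2 * Real.pi)⁻¹ * ∫ θ in (0:ℝ)..(2 * Real.pi), u (z + r * Complex.exp (θ * Complex.I))

/-- The open unit disk in `ℂ`. -/
def unitDisk : Set ℂ := Metric.ball 0 1

/-- The non-tangential cone `Γ_α(ξ) = {p ∈ D : |ξ - p| ≤ (1+α)(1-|p|)}`
with vertex `ξ ∈ ∂D` and aperture parameter `α > 0`. -/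
def ntCone (α : ℝ) (ξ : ℂ) : Set ℂ :=
  {p ∈ unitDisk | ‖ξ - p‖ ≤ (1 + α) * (1 - ‖p‖)}

/-- The harmonic extension (Poisson integral) of `u` to the disk `B(x,r)`,
evaluated at `z`:
`h_{x,r}(z) = (1/2π)∫₀^{2π} u(x+re^{iθ})·(r²-|z-x|²)/|x+re^{iθ}-z|² dθ`. -/
noncomputable def harmExt (u : ℂ → ℝ) (x : ℂ) (r : ℝ) (z : ℂ) : ℝ :=
  (2 * Real.pi)⁻¹ * ∫ θ in (0:ℝ)..(2 * Real.pi),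
    u (x + r * Complex.exp (θ * Complex.I)) *
      ((r ^ 2 - ‖z - x‖ ^ 2) /
        ‖x + r * Complex.exp (θ * Complex.I) - z‖ ^ 2)

/-- The family `𝓕_z` of admissible pairs `(x,r)`: `x ∈ D`, `0 < r ≤ κ(1-|x|)`,
`z ∈ B(x,r)`, and `u(x)` equals the mean value of `u` on `∂B(x,r)`. -/
def admissiblePairs (u : ℂ → ℝ) (κ : ℝ) (z : ℂ) : Set (ℂ × ℝ) :=
  {p | p.1 ∈ unitDisk ∧ 0 < p.2 ∧ p.2 ≤ κ * (1 - ‖p.1‖) ∧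
    ‖z - p.1‖ < p.2 ∧ u p.1 = circleAvg u p.1 p.2}

/-- The auxiliary subharmonic function
`v(z) = sup { h_{x,r}(z) : (x,r) ∈ 𝓕_z }`. -/
noncomputable def vFun (u : ℂ → ℝ) (κ : ℝ) (z : ℂ) : ℝ :=
  sSup ((fun p : ℂ × ℝ => harmExt u p.1 p.2 z) '' admissiblePairs u κ z)

lemma intF (r : ℝ) (hr : 0 < r) (w : ℂ) (hw : ‖w‖ < r) :
    ∫ θ in (0:ℝ)..(2*Real.pi),
      ((r:ℂ) * Complex.exp (θ*Complex.I)) / ((r:ℂ)*Complex.exp (θ*Complex.I) - w)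
      = 2*Real.pi := by
  have h1 := circleIntegral.integral_sub_inv_of_mem_ball (c := 0) (R := r) (w := w)
    (by simpa using hw)
  have h0 := circleIntegral.integral_sub_inv_of_mem_ball (c := 0) (R := r) (w := 0)
    (by simpa using hr)
  simp only [circleIntegral, deriv_circleMap, circleMap_zero, smul_eq_mul, sub_zero] at h1 h0
  have hne : ∀ θ : ℝ, (r:ℂ) * Complex.exp (θ*Complex.I) ≠ 0 := by
    intro θ
    simp [Complex.exp_ne_zero, (by exact_mod_cast hr.ne' : (r:ℂ) ≠ 0)]
  have h0' : (∫ θ in (0:ℝ)..(2*Real.pi), (Complex.I : ℂ)) = 2*Real.pi*Complex.I := by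
    rw [← h0]
    apply intervalIntegral.integral_congr
    intro θ _
    field_simp [hne θ, (by exact_mod_cast hr.ne' : (r:ℂ) ≠ 0)]
  have h1' : Complex.I * ∫ θ in (0:ℝ)..(2*Real.pi),
      ((r:ℂ) * Complex.exp (θ*Complex.I)) / ((r:ℂ)*Complex.exp (θ*Complex.I) - w)
      = 2*Real.pi*Complex.I := by
    rw [← intervalIntegral.integral_const_mul, ← h1]
    apply intervalIntegral.integral_congr
    intro θ _
    field_simp
  have h2 : Complex.I * (2*Real.pi : ℂ) = 2*Real.pi*Complex.I := by ring
  have := h1'.trans h2.symm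
  exact mul_left_cancel₀ Complex.I_ne_zero this

lemma abs_rexp (r : ℝ) (hr : 0 < r) (θ : ℝ) :
    ‖(r:ℂ) * Complex.exp (θ*Complex.I)‖ = r := by
  rw [norm_mul, Complex.norm_real, Real.norm_eq_abs, abs_of_pos hr, Complex.norm_exp_ofReal_mul_I, mul_one]

lemma sub_ne (r : ℝ) (hr : 0 < r) (w : ℂ) (hw : ‖w‖ < r) (θ : ℝ) :
    (r:ℂ) * Complex.exp (θ*Complex.I) - w ≠ 0 := by
  intro h
  rw [sub_eq_zero] at h
  rw [← h, abs_rexp r hr] at hw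
  exact lt_irrefl _ hw

lemma contF (r : ℝ) (hr : 0 < r) (w : ℂ) (hw : ‖w‖ < r) :
    Continuous fun θ : ℝ =>
      ((r:ℂ) * Complex.exp (θ*Complex.I)) / ((r:ℂ)*Complex.exp (θ*Complex.I) - w) := by
  have hc : Continuous fun θ : ℝ => (r:ℂ) * Complex.exp (θ*Complex.I) :=
    continuous_const.mul (Complex.continuous_exp.comp (Complex.continuous_ofReal.mul continuous_const))
  exact hc.div (hc.sub continuous_const) (fun θ => sub_ne r hr w hw θ)

lemma kernel_eq (r : ℝ) (hr : 0 < r) (w : ℂ) (hw : ‖w‖ < r) (θ : ℝ) :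
    (r^2 - ‖w‖^2) / (‖(r:ℂ) * Complex.exp (θ*Complex.I) - w‖)^2
      = 2 * (((r:ℂ) * Complex.exp (θ*Complex.I)) / ((r:ℂ)*Complex.exp (θ*Complex.I) - w)).re - 1 := by
  set a := (r:ℂ) * Complex.exp (θ*Complex.I) with ha
  have h1 : r^2 = a.re^2 + a.im^2 := by
    rw [← abs_rexp r hr θ, ← ha, Complex.sq_norm, Complex.normSq_apply]; ring
  have h2 : ‖w‖ ^ 2 = w.re^2 + w.im^2 := by
    rw [Complex.sq_norm, Complex.normSq_apply]; ring
  have h3 : ‖a - w‖ ^ 2 = (a.re - w.re)^2 + (a.im - w.im)^2 := by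
    rw [Complex.sq_norm, Complex.normSq_apply, Complex.sub_re, Complex.sub_im]; ring
  have hne : Complex.normSq (a - w) ≠ 0 :=
    fun h => sub_ne r hr w hw θ (Complex.normSq_eq_zero.mp h)
  have hN : (a.re - w.re)^2 + (a.im - w.im)^2 ≠ 0 := by
    rw [← h3, Complex.sq_norm]; exact hne
  have haux : ∀ p q s t : ℝ, (p-s)*(p-s)+(q-t)*(q-t) ≠ 0 →
      (p^2+q^2 - (s^2+t^2))/((p-s)^2+(q-t)^2)
        = 2*(p*(p-s)/((p-s)*(p-s)+(q-t)*(q-t)) + q*(q-t)/((p-s)*(p-s)+(q-t)*(q-t))) - 1 := by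
    intro p q s t h
    have h2 : (p-s)^2+(q-t)^2 ≠ 0 := by intro h3; apply h; nlinarith [h3]
    field_simp
    ring
  rw [Complex.div_re, h1, h2, h3, Complex.normSq_apply, Complex.sub_re, Complex.sub_im]
  apply haux
  have := hne
  rw [Complex.normSq_apply, Complex.sub_re, Complex.sub_im] at this
  exact this

lemma poisson_int (r : ℝ) (hr : 0 < r) (w : ℂ) (hw : ‖w‖ < r) :
    ∫ θ in (0:ℝ)..(2*Real.pi),
      (r^2 - ‖w‖^2) / (‖(r:ℂ) * Complex.exp (θ*Complex.I) - w‖)^2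
      = 2*Real.pi := by
  have hF := contF r hr w hw
  have hFi : IntervalIntegrable (fun θ : ℝ =>
      ((r:ℂ) * Complex.exp (θ*Complex.I)) / ((r:ℂ)*Complex.exp (θ*Complex.I) - w))
      volume 0 (2*Real.pi) := hF.intervalIntegrable _ _
  have hre : (∫ θ in (0:ℝ)..(2*Real.pi),
      (((r:ℂ) * Complex.exp (θ*Complex.I)) / ((r:ℂ)*Complex.exp (θ*Complex.I) - w)).re)
      = 2*Real.pi := by
    have := Complex.reCLM.intervalIntegral_comp_comm hFi
    simp only [Complex.reCLM_apply] at this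
    rw [this, intF r hr w hw]
    norm_num
  calc ∫ θ in (0:ℝ)..(2*Real.pi),
      (r^2 - ‖w‖^2) / (‖(r:ℂ) * Complex.exp (θ*Complex.I) - w‖)^2
      = ∫ θ in (0:ℝ)..(2*Real.pi),
        (2 * (((r:ℂ) * Complex.exp (θ*Complex.I)) / ((r:ℂ)*Complex.exp (θ*Complex.I) - w)).re - 1) := by
        apply intervalIntegral.integral_congr
        intro θ _
        exact kernel_eq r hr w hw θ
    _ = 2 * (∫ θ in (0:ℝ)..(2*Real.pi),
        (((r:ℂ) * Complex.exp (θ*Complex.I)) / ((r:ℂ)*Complex.exp (θ*Complex.I) - w)).re)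
        - ∫ θ in (0:ℝ)..(2*Real.pi), (1:ℝ) := by
        rw [← intervalIntegral.integral_const_mul, intervalIntegral.integral_sub]
        · exact ((Complex.continuous_re.comp hF).intervalIntegrable _ _).const_mul 2
        · exact intervalIntegrable_const
    _ = 2*Real.pi := by rw [hre]; simp; ring

lemma harmExt_self (u : ℂ → ℝ) (x : ℂ) (r : ℝ) (hr : 0 < r) :
    harmExt u x r x = circleAvg u x r := by
  unfold harmExt circleAvg
  congr 1
  apply intervalIntegral.integral_congr
  intro θ _
  have h1 : x + (r:ℂ) * Complex.exp (θ*Complex.I) - x = (r:ℂ) * Complex.exp (θ*Complex.I) := by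
    ring
  dsimp only
  rw [h1, sub_self, norm_zero, abs_rexp r hr]
  rw [show (0:ℝ)^2 = 0 by ring, sub_zero, div_self (by positivity), mul_one]

lemma harmExt_close (u : ℂ → ℝ) (uξ ε : ℝ) (x z : ℂ) (r : ℝ) (hr : 0 < r)
    (hzx : ‖z - x‖ < r)
    (hu : Continuous fun θ : ℝ => u (x + r * Complex.exp (θ * Complex.I)))
    (hclose : ∀ θ : ℝ, |u (x + r * Complex.exp (θ * Complex.I)) - uξ| ≤ ε) :
    |harmExt u x r z - uξ| ≤ ε := by
  have hπ : (0:ℝ) < 2 * Real.pi := by positivity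
  set g : ℝ → ℝ := fun θ => u (x + r * Complex.exp (θ * Complex.I)) with hg
  set K : ℝ → ℝ := fun θ =>
    (r^2 - ‖z - x‖^2) / (‖(r:ℂ) * Complex.exp (θ*Complex.I) - (z - x)‖)^2
    with hKdef
  have hrw : ∀ θ : ℝ, x + (r:ℂ) * Complex.exp (θ*Complex.I) - z
      = (r:ℂ) * Complex.exp (θ*Complex.I) - (z - x) := fun θ => by ring
  have hKcont : Continuous K := by
    apply continuous_const.div
    · apply Continuous.pow
      apply continuous_norm.comp
      exact (continuous_const.mul (Complex.continuous_exp.comp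
        (Complex.continuous_ofReal.mul continuous_const))).sub continuous_const
    · intro θ
      exact pow_ne_zero 2 (norm_ne_zero_iff.mpr (sub_ne r hr (z - x) hzx θ))
  have hKpos : ∀ θ, 0 ≤ K θ := by
    intro θ
    apply div_nonneg
    · nlinarith [norm_nonneg (z - x)]
    · positivity
  have hKint : ∫ θ in (0:ℝ)..(2*Real.pi), K θ = 2*Real.pi := poisson_int r hr (z - x) hzx
  have hgK : Continuous fun θ => g θ * K θ := hu.mul hKcont
  have hEq : harmExt u x r z = (2*Real.pi)⁻¹ * ∫ θ in (0:ℝ)..(2*Real.pi), g θ * K θ := by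
    unfold harmExt
    congr 1
    apply intervalIntegral.integral_congr
    intro θ _
    dsimp only
    rw [hrw θ]
  have h1 : ∫ θ in (0:ℝ)..(2*Real.pi), (g θ - uξ) * K θ
      = (∫ θ in (0:ℝ)..(2*Real.pi), g θ * K θ) - uξ * (2*Real.pi) := by
    have : (fun θ => (g θ - uξ) * K θ) = fun θ => g θ * K θ - uξ * K θ := by
      funext θ; ring
    rw [this, intervalIntegral.integral_sub (f := fun θ => g θ * K θ) (g := fun θ => uξ * K θ)
      (hgK.intervalIntegrable _ _)
      ((continuous_const.mul hKcont).intervalIntegrable _ _),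
      intervalIntegral.integral_const_mul, hKint]
  have h2 : harmExt u x r z - uξ = (2*Real.pi)⁻¹ * ∫ θ in (0:ℝ)..(2*Real.pi), (g θ - uξ) * K θ := by
    rw [h1, hEq]
    field_simp
  rw [h2, abs_mul, abs_of_pos (inv_pos.mpr hπ)]
  have h3 : |∫ θ in (0:ℝ)..(2*Real.pi), (g θ - uξ) * K θ|
      ≤ ∫ θ in (0:ℝ)..(2*Real.pi), |(g θ - uξ) * K θ| :=
    intervalIntegral.abs_integral_le_integral_abs (by linarith)
  have h4 : ∫ θ in (0:ℝ)..(2*Real.pi), |(g θ - uξ) * K θ|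
      ≤ ∫ θ in (0:ℝ)..(2*Real.pi), ε * K θ := by
    apply intervalIntegral.integral_mono_on (by linarith)
    · exact (((hu.sub continuous_const).mul hKcont).abs).intervalIntegrable _ _
    · exact (continuous_const.mul hKcont).intervalIntegrable _ _
    · intro θ _
      rw [abs_mul, _root_.abs_of_nonneg (hKpos θ)]
      exact mul_le_mul_of_nonneg_right (hclose θ) (hKpos θ)
  have h5 : ∫ θ in (0:ℝ)..(2*Real.pi), ε * K θ = ε * (2*Real.pi) := by
    rw [intervalIntegral.integral_const_mul, hKint]
  calc (2*Real.pi)⁻¹ * |∫ θ in (0:ℝ)..(2*Real.pi), (g θ - uξ) * K θ|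
      ≤ (2*Real.pi)⁻¹ * (ε * (2*Real.pi)) := by
        apply mul_le_mul_of_nonneg_left _ (le_of_lt (inv_pos.mpr hπ))
        calc _ ≤ _ := h3
          _ ≤ _ := h4
          _ = _ := h5
    _ = ε := by field_simp

lemma mem_unitDisk {w : ℂ} : w ∈ unitDisk ↔ ‖w‖ < 1 := by
  simp [unitDisk, Metric.mem_ball, Complex.dist_eq]

lemma geom (α κ η : ℝ) (hα : 0 < α) (hκ0 : 0 < κ) (hκ1 : κ < 1) (hη : 0 ≤ η)
    (hkey : (1+η)*(1+κ) + 2*κ ≤ (1+α)*(1-κ))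
    (ξ z x : ℂ) (r : ℝ) (hx : ‖x‖ < 1)
    (hr : 0 < r) (hrκ : r ≤ κ*(1 - ‖x‖))
    (hzx : ‖z - x‖ < r)
    (hz : ‖ξ - z‖ ≤ (1+η)*(1 - ‖z‖)) (θ : ℝ) :
    (x + (r:ℂ)*Complex.exp (θ*Complex.I)) ∈ ntCone α ξ ∧
    ‖ξ - (x + (r:ℂ)*Complex.exp (θ*Complex.I))‖
      ≤ ((1+η)*(1+κ) + 2*κ)/(1-κ) * (1 - ‖z‖) := by
  set p : ℂ := x + (r:ℂ)*Complex.exp (θ*Complex.I) with hp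
  set s : ℝ := 1 - ‖x‖ with hs
  have hs0 : 0 < s := by simp [hs]; linarith
  have habsp : ‖p‖ ≤ ‖x‖ + r := by
    calc ‖p‖ ≤ ‖x‖ + ‖(r:ℂ)*Complex.exp (θ*Complex.I)‖ :=
      norm_add_le _ _
    _ = ‖x‖ + r := by rw [abs_rexp r hr]
  have h1p : (1-κ)*s ≤ 1 - ‖p‖ := by
    have : r ≤ κ * s := hrκ
    simp only [hs] at *
    nlinarith
  have hz1 : 1 - ‖z‖ ≤ (1+κ)*s := by
    have htri : ‖x‖ ≤ ‖z‖ + ‖z - x‖ := by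
      have h := norm_add_le z (x - z)
      rw [show z + (x - z) = x by ring, norm_sub_rev x z] at h
      linarith
    nlinarith
  have hz2 : s ≤ 1 - ‖z‖ + κ * s := by
    have htri : ‖z‖ ≤ ‖x‖ + ‖z - x‖ := by
      calc ‖z‖ = ‖x + (z - x)‖ := by ring_nf
      _ ≤ ‖x‖ + ‖z - x‖ := norm_add_le _ _
    nlinarith
  have hξp : ‖ξ - p‖ ≤ ((1+η)*(1+κ) + 2*κ) * s := by
    have e1 : ξ - p = (ξ - z) + ((z - x) + (x - p)) := by ring
    have hxp : ‖x - p‖ = r := by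
      have : x - p = -((r:ℂ)*Complex.exp (θ*Complex.I)) := by rw [hp]; ring
      rw [this, norm_neg, abs_rexp r hr]
    have h2 : ‖ξ - p‖ ≤ ‖ξ - z‖ + (‖z - x‖ + ‖x - p‖) := by
      rw [e1]
      calc ‖(ξ - z) + ((z - x) + (x - p))‖
          ≤ ‖ξ - z‖ + ‖(z - x) + (x - p)‖ := norm_add_le _ _
        _ ≤ ‖ξ - z‖ + (‖z - x‖ + ‖x - p‖) := by
            have := norm_add_le (z - x) (x - p); linarith
    rw [hxp] at h2
    nlinarith
  constructor
  · constructor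
    · rw [mem_unitDisk]
      nlinarith
    · calc ‖ξ - p‖ ≤ ((1+η)*(1+κ) + 2*κ) * s := hξp
        _ ≤ (1+α)*(1-κ)*s := by nlinarith
        _ ≤ (1+α)*(1 - ‖p‖) := by nlinarith
  · calc ‖ξ - p‖ ≤ ((1+η)*(1+κ) + 2*κ) * s := hξp
      _ ≤ ((1+η)*(1+κ) + 2*κ)/(1-κ) * (1 - ‖z‖) := by
        rw [div_mul_eq_mul_div, le_div_iff₀ (by linarith : (0:ℝ) < 1-κ)]
        have hC : 0 ≤ (1+η)*(1+κ) + 2*κ := by nlinarith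
        nlinarith

/-- let `u : D → ℝ` be bounded, continuous, satisfying the
restricted mean value property on circles of radius `ρ(z) ≤ κ(1-|z|)` with
`0 < κ < α/(4+α)`, and let `ξ ∈ ∂D` be such that `u(z) → u_ξ` as `z → ξ`
inside the non-tangential cone `Γ_α(ξ)`.  Then `v(z_n) → u_ξ` along every
sequence `(z_n)` converging normally to `ξ`, i.e. `z_n → ξ` with
`|ξ - z_n|/(1 - |z_n|) → 1`. -/
theorem v_normal_limit_from_nontangential_limit (α κ : ℝ) (hα : 0 < α)
    (hκ0 : 0 < κ) (hκ : κ < α / (4 + α)) (u : ℂ → ℝ)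
    (hbd : ∃ M : ℝ, ∀ z ∈ unitDisk, |u z| ≤ M)
    (hcont : ContinuousOn u unitDisk)
    (hrmvp : ∀ z ∈ unitDisk, ∃ ρ : ℝ, 0 < ρ ∧ ρ ≤ κ * (1 - ‖z‖) ∧
      u z = circleAvg u z ρ)
    (ξ : ℂ) (hξ : ‖ξ‖ = 1) (uξ : ℝ)
    (hlim : Tendsto u (nhdsWithin ξ (ntCone α ξ)) (nhds uξ)) :
    ∀ z : ℕ → ℂ, (∀ n, z n ∈ unitDisk) → Tendsto z atTop (nhds ξ) →
      Tendsto (fun n => ‖ξ - z n‖ / (1 - ‖z n‖)) atTop (nhds 1) →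
      Tendsto (fun n => vFun u κ (z n)) atTop (nhds uξ) := by
  intro z hzD hzlim hzratio
  have h4α : (0:ℝ) < 4 + α := by linarith
  have hκα : κ * (4 + α) < α := by
    rw [lt_div_iff₀ h4α] at hκ; linarith
  have hκ1 : κ < 1 := by nlinarith
  set η : ℝ := ((1+α)*(1-κ) - (1+3*κ))/(1+κ) with hηdef
  have hηpos : 0 < η := by
    apply div_pos _ (by linarith)
    nlinarith
  have hkey : (1+η)*(1+κ) + 2*κ = (1+α)*(1-κ) := by
    have h1κ : (1+κ) ≠ 0 := by linarith
    rw [hηdef, add_mul, div_mul_cancel₀ _ h1κ]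
    ring
  have hηα : η ≤ α := by
    rw [hηdef, div_le_iff₀ (by linarith : (0:ℝ) < 1+κ)]
    nlinarith
  set C : ℝ := ((1+η)*(1+κ) + 2*κ)/(1-κ) with hCdef
  rw [Metric.tendsto_atTop]
  intro ε hε
  rw [Metric.tendsto_nhdsWithin_nhds] at hlim
  obtain ⟨δ, hδpos, hδ⟩ := hlim (ε/3) (by linarith)
  have habs1 : ∀ n, ‖z n‖ < 1 := fun n => mem_unitDisk.mp (hzD n)
  have hE1 : ∀ᶠ n in atTop, ‖ξ - z n‖ ≤ (1+η)*(1 - ‖z n‖) := by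
    filter_upwards [hzratio.eventually (eventually_lt_nhds (by linarith : (1:ℝ) < 1+η))] with n hn
    have h0 : 0 < 1 - ‖z n‖ := by linarith [habs1 n]
    rw [div_lt_iff₀ h0] at hn
    linarith
  have hE2 : ∀ᶠ n in atTop, C * (1 - ‖z n‖) < δ := by
    have habs : Tendsto (fun n => C * (1 - ‖z n‖)) atTop
        (nhds (C * (1 - ‖ξ‖))) :=
      tendsto_const_nhds.mul
        (tendsto_const_nhds.sub ((continuous_norm.tendsto ξ).comp hzlim))
    rw [hξ] at habs
    simp only [sub_self, mul_zero] at habs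
    exact habs.eventually (eventually_lt_nhds hδpos)
  have hE3 : ∀ᶠ n in atTop, dist (z n) ξ < δ := Metric.tendsto_nhds.mp hzlim δ hδpos
  rw [← Filter.eventually_atTop]
  filter_upwards [hE1, hE2, hE3] with n h1 h2 h3
  obtain ⟨ρ, hρ0, hρκ, hρmean⟩ := hrmvp (z n) (hzD n)
  have hcen : ((z n), ρ) ∈ admissiblePairs u κ (z n) :=
    ⟨hzD n, hρ0, hρκ, by simpa using hρ0, hρmean⟩
  have hub : ∀ y ∈ (fun p : ℂ × ℝ => harmExt u p.1 p.2 (z n)) '' admissiblePairs u κ (z n),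
      y ≤ uξ + ε/3 := by
    rintro y ⟨⟨x, r⟩, ⟨hxD, hr0, hrκ2, hzxr, _⟩, rfl⟩
    have hx1 : ‖x‖ < 1 := mem_unitDisk.mp hxD
    have hgeom := fun θ : ℝ =>
      geom α κ η hα hκ0 hκ1 hηpos.le (le_of_eq hkey) ξ (z n) x r hx1 hr0 hrκ2 hzxr h1 θ
    have hcirc : ∀ θ : ℝ, (x + (r:ℂ)*Complex.exp (θ*Complex.I)) ∈ unitDisk :=
      fun θ => (hgeom θ).1.1
    have hcont' : Continuous fun θ : ℝ => u (x + (r:ℂ) * Complex.exp (θ * Complex.I)) := by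
      apply hcont.comp_continuous _ hcirc
      exact continuous_const.add (continuous_const.mul
        (Complex.continuous_exp.comp (Complex.continuous_ofReal.mul continuous_const)))
    have hclose : ∀ θ : ℝ, |u (x + (r:ℂ) * Complex.exp (θ * Complex.I)) - uξ| ≤ ε/3 := by
      intro θ
      have hmem := (hgeom θ).1
      have hdist : dist (x + (r:ℂ)*Complex.exp (θ*Complex.I)) ξ < δ := by
        rw [Complex.dist_eq, norm_sub_rev]
        calc ‖ξ - (x + (r:ℂ)*Complex.exp (θ*Complex.I))‖
            ≤ C * (1 - ‖z n‖) := (hgeom θ).2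
          _ < δ := h2
      have hh := hδ hmem hdist
      rw [Real.dist_eq] at hh
      linarith
    have hcl := harmExt_close u uξ (ε/3) x (z n) r hr0 hzxr hcont' hclose
    have := abs_le.mp hcl
    linarith [this.2]
  have hbdd : BddAbove ((fun p : ℂ × ℝ => harmExt u p.1 p.2 (z n)) ''
      admissiblePairs u κ (z n)) := ⟨uξ + ε/3, fun y hy => hub y hy⟩
  have hmemS : harmExt u (z n) ρ (z n) ∈
      (fun p : ℂ × ℝ => harmExt u p.1 p.2 (z n)) '' admissiblePairs u κ (z n) :=
    Set.mem_image_of_mem _ hcen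
  have hvlow : u (z n) ≤ vFun u κ (z n) := by
    have hle := le_csSup hbdd hmemS
    rw [harmExt_self u (z n) ρ hρ0, ← hρmean] at hle
    exact hle
  have hvhigh : vFun u κ (z n) ≤ uξ + ε/3 := csSup_le ⟨_, hmemS⟩ hub
  have hulow : |u (z n) - uξ| < ε/3 := by
    have hwcone : (z n) ∈ ntCone α ξ := by
      refine ⟨hzD n, ?_⟩
      have h0 : 0 ≤ 1 - ‖z n‖ := by linarith [habs1 n]
      nlinarith
    have hh := hδ hwcone h3
    rwa [Real.dist_eq] at hh
  rw [Real.dist_eq, abs_sub_lt_iff]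
  have hul := abs_sub_lt_iff.mp hulow
  constructor
  · linarith
  · linarith [hul.2]
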